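/- Let U : [0,∞) → ℝ be bounded with U(r) = 1/(r log(er)) for r > 1, and let Φ_U(r,τ) := U(r) - U(rτ) + (U(r)-U(r/τ))/τ. Then for z := 1/log r ∈ (0, 1/2), |∫_r^∞ Φ_U(r,τ) τ^{-2} r dτ| ≤ (1 + U(0)/2) e^{-1/z}, i.e. the tail integral is exponentially small in log r. -/

import Mathlib

open Real MeasureTheory

/-- exponential smallness of the tail integral
`∫_r^∞ Φ_U(r,τ) τ⁻² r dτ` for the logarithmic barrier. -/
theorem log_barrier_tail_estimate (U : ℝ → ℝ)
    (hU_bdd : ∀ r : ℝ, 0 ≤ r → 0 ≤ U r ∧ U r ≤ U 0)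
    (hU_eq : ∀ r : ℝ, 1 < r → U r = 1 / (r * Real.log (Real.exp 1 * r)))
    (r : ℝ) (hr : Real.exp 2 < r) :
    |∫ τ in Set.Ioi r,
        (U r - U (r * τ) + (U r - U (r / τ)) / τ) * τ⁻¹ ^ 2 * r| ≤
      (1 + U 0 / 2) * Real.exp (-(1 / (1 / Real.log r))) := by
  have hr1 : (1 : ℝ) < r := by
    linarith [Real.add_one_le_exp 2]
  have hr0 : (0 : ℝ) < r := by linarith
  have hlogr : 2 < Real.log r := by
    have := Real.log_lt_log (Real.exp_pos 2) hr
    rwa [Real.log_exp] at this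
  have hU0 : 0 ≤ U 0 := (hU_bdd 0 le_rfl).1
  -- simplify the RHS
  have hrhs : Real.exp (-(1 / (1 / Real.log r))) = r⁻¹ := by
    rw [one_div_one_div, Real.exp_neg, Real.exp_log hr0]
  -- the dominating function
  set g : ℝ → ℝ := fun τ => U r * r * τ ^ (-2 : ℝ) + U 0 * r * τ ^ (-3 : ℝ) with hg
  have hint2 : MeasureTheory.IntegrableOn (fun τ : ℝ => τ ^ (-2 : ℝ)) (Set.Ioi r) :=
    integrableOn_Ioi_rpow_of_lt (by norm_num) hr0
  have hint3 : MeasureTheory.IntegrableOn (fun τ : ℝ => τ ^ (-3 : ℝ)) (Set.Ioi r) :=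
    integrableOn_Ioi_rpow_of_lt (by norm_num) hr0
  have hgint : MeasureTheory.IntegrableOn g (Set.Ioi r) :=
    (hint2.const_mul _).add (hint3.const_mul _)
  -- pointwise bound
  have hbound : ∀ᵐ τ ∂(volume.restrict (Set.Ioi r)),
      ‖(U r - U (r * τ) + (U r - U (r / τ)) / τ) * τ⁻¹ ^ 2 * r‖ ≤ g τ := by
    filter_upwards [ae_restrict_mem measurableSet_Ioi] with τ hτ
    have hτr : r < τ := hτ
    have hτ0 : (0 : ℝ) < τ := lt_trans hr0 hτr
    have hτ1 : (1 : ℝ) < τ := lt_trans hr1 hτr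
    have hrτ1 : (1 : ℝ) < r * τ := by nlinarith
    -- U (r*τ) ≤ U r
    have hden_pos : 0 < r * Real.log (Real.exp 1 * r) := by
      have : 0 < Real.log (Real.exp 1 * r) := by
        rw [Real.log_mul (Real.exp_pos 1).ne' hr0.ne', Real.log_exp]; linarith
      positivity
    have hden_le : r * Real.log (Real.exp 1 * r) ≤ r * τ * Real.log (Real.exp 1 * (r * τ)) := by
      have hlog_le : Real.log (Real.exp 1 * r) ≤ Real.log (Real.exp 1 * (r * τ)) := by
        apply Real.log_le_log (by positivity)
        nlinarith [mul_pos (mul_pos (Real.exp_pos 1) hr0) (sub_pos.mpr hτ1)]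
      have hlog_pos : 0 < Real.log (Real.exp 1 * r) := by
        nlinarith
      nlinarith
    have hUrτ : U (r * τ) ≤ U r := by
      rw [hU_eq r hr1, hU_eq (r * τ) hrτ1]
      exact one_div_le_one_div_of_le hden_pos hden_le
    have hUrτ0 : 0 ≤ U (r * τ) := (hU_bdd (r * τ) (by positivity)).1
    have hA : |U r - U (r * τ)| ≤ U r := by
      rw [abs_of_nonneg (by linarith)]; linarith
    -- second difference bounded by U 0
    have hB : |U r - U (r / τ)| ≤ U 0 := by
      obtain ⟨h1, h2⟩ := hU_bdd r hr0.le
      obtain ⟨h3, h4⟩ := hU_bdd (r / τ) (by positivity)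
      rw [abs_sub_le_iff]; constructor <;> linarith
    have key : |U r - U (r * τ) + (U r - U (r / τ)) / τ| ≤ U r + U 0 * τ⁻¹ := by
      calc |U r - U (r * τ) + (U r - U (r / τ)) / τ|
          ≤ |U r - U (r * τ)| + |(U r - U (r / τ)) / τ| := abs_add_le _ _
        _ ≤ U r + U 0 * τ⁻¹ := by
            rw [abs_div, abs_of_pos hτ0, div_eq_mul_inv]
            have := mul_le_mul_of_nonneg_right hB (inv_nonneg.2 hτ0.le)
            linarith
    have hpow : ∀ n : ℕ, τ ^ (-(n : ℝ)) = τ⁻¹ ^ n := fun n => by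
      rw [Real.rpow_neg hτ0.le, Real.rpow_natCast, eq_comm, inv_pow]
    have h2 : τ ^ (-2 : ℝ) = τ⁻¹ ^ 2 := by
      have := hpow 2; norm_num at this ⊢
    have h3 : τ ^ (-3 : ℝ) = τ⁻¹ ^ 3 := by
      have := hpow 3; norm_num at this ⊢
    rw [Real.norm_eq_abs, abs_mul, abs_mul, abs_of_pos hr0, abs_of_nonneg (sq_nonneg τ⁻¹)]
    have : |U r - U (r * τ) + (U r - U (r / τ)) / τ| * τ⁻¹ ^ 2 * r
        ≤ (U r + U 0 * τ⁻¹) * τ⁻¹ ^ 2 * r := by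
      have h := mul_le_mul_of_nonneg_right key (sq_nonneg τ⁻¹)
      exact mul_le_mul_of_nonneg_right h hr0.le
    refine this.trans (le_of_eq ?_)
    rw [hg]; simp only [h2, h3]; ring
  -- bound the integral by the integral of g
  have hmain : |∫ τ in Set.Ioi r,
      (U r - U (r * τ) + (U r - U (r / τ)) / τ) * τ⁻¹ ^ 2 * r| ≤ ∫ τ in Set.Ioi r, g τ := by
    rw [← Real.norm_eq_abs]
    exact MeasureTheory.norm_integral_le_of_norm_le hgint hbound
  -- compute ∫ g
  have hI2 : ∫ τ in Set.Ioi r, τ ^ (-2 : ℝ) = r⁻¹ := by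
    rw [integral_Ioi_rpow_of_lt (by norm_num) hr0]
    norm_num
    rw [Real.rpow_neg_one]
  have hI3 : ∫ τ in Set.Ioi r, τ ^ (-3 : ℝ) = r⁻¹ ^ 2 / 2 := by
    rw [integral_Ioi_rpow_of_lt (by norm_num) hr0]
    norm_num
  have hgval : ∫ τ in Set.Ioi r, g τ = U r + U 0 * r⁻¹ / 2 := by
    rw [hg]
    rw [MeasureTheory.integral_add (hint2.const_mul _) (hint3.const_mul _),
      integral_const_mul, integral_const_mul, hI2, hI3]
    field_simp
  -- U r ≤ r⁻¹
  have hUr_le : U r ≤ r⁻¹ := by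
    rw [hU_eq r hr1, one_div]
    apply inv_anti₀ hr0
    have : 1 ≤ Real.log (Real.exp 1 * r) := by
      rw [Real.log_mul (Real.exp_pos 1).ne' hr0.ne', Real.log_exp]; linarith
    nlinarith
  rw [hrhs]
  calc |∫ τ in Set.Ioi r, (U r - U (r * τ) + (U r - U (r / τ)) / τ) * τ⁻¹ ^ 2 * r|
      ≤ ∫ τ in Set.Ioi r, g τ := hmain
    _ = U r + U 0 * r⁻¹ / 2 := hgval
    _ ≤ r⁻¹ + U 0 * r⁻¹ / 2 := by linarith
    _ = (1 + U 0 / 2) * r⁻¹ := by ring
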